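/- Let F be the Farey map and 𝒞_n the n-th sum-level set, i.e., the set of x ∈ [0,1] whose regular continued fraction expansion [a₁,a₂,…] satisfies a₁ + ⋯ + a_k = n for some k. Then F⁻¹(𝒞_n) = 𝒞_{n+1} for all n ≥ 1, and hence 𝒞_n = F^{-(n-1)}([1/2, 1]). -/

import Mathlib

noncomputable def farey (x : ℝ) : ℝ := if x ≤ 1/2 then x / (1 - x) else (1 - x) / x

/-- The value of a finite continued fraction `[a₁,…,a_k]` with tail `t`:
`cfAux [a₁,…,a_k] t = 1/(a₁ + 1/(a₂ + ⋯ + 1/(a_k + t)))`. -/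
noncomputable def cfAux : List ℕ+ → ℝ → ℝ
  | [], t => t
  | a :: l, t => 1 / ((a : ℝ) + cfAux l t)

/-- The n-th sum-level set: points of `[0,1]` admitting a continued fraction
expansion whose first `k` digits sum to `n` for some `k ≥ 1`. -/
noncomputable def sumLevel (n : ℕ) : Set ℝ :=
  {x | ∃ l : List ℕ+, l ≠ [] ∧ (l.map (fun a => (a : ℕ))).sum = n ∧
    ∃ t ∈ Set.Icc (0:ℝ) 1, x = cfAux l t}

lemma cfAux_mem (l : List ℕ+) (t : ℝ) (ht : t ∈ Set.Icc (0:ℝ) 1) :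
    cfAux l t ∈ Set.Icc (0:ℝ) 1 := by
  induction l with
  | nil => exact ht
  | cons a l ih =>
    obtain ⟨h0, h1⟩ := ih
    have ha : (1:ℝ) ≤ (a:ℝ) := by exact_mod_cast a.one_le
    have hpos : (0:ℝ) < (a:ℝ) + cfAux l t := by linarith
    constructor
    · rw [cfAux]; positivity
    · rw [cfAux, div_le_one hpos]; linarith

lemma farey_small (c : ℝ) (hc : 2 ≤ c) : farey (1/c) = 1/(c-1) := by
  have hc0 : (0:ℝ) < c := by linarith
  have hc1 : (0:ℝ) < c - 1 := by linarith
  have hle : 1/c ≤ 1/2 := by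
    rw [div_le_div_iff₀ hc0 two_pos]; linarith
  rw [farey, if_pos hle]
  field_simp

lemma farey_one_add (y : ℝ) (hy : y ∈ Set.Icc (0:ℝ) 1) : farey (1/(1+y)) = y := by
  obtain ⟨h0, h1⟩ := hy
  rcases eq_or_lt_of_le h1 with h | h
  · subst h
    norm_num [farey]
  · have hpos : (0:ℝ) < 1 + y := by linarith
    have hgt : ¬ (1/(1+y) ≤ 1/2) := by
      rw [not_le, div_lt_div_iff₀ two_pos hpos]; linarith
    rw [farey, if_neg hgt]
    field_simp
    ring

lemma farey_maps (x : ℝ) (hx : x ∈ Set.Icc (0:ℝ) 1) : farey x ∈ Set.Icc (0:ℝ) 1 := by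
  obtain ⟨h0, h1⟩ := hx
  rw [farey]
  split_ifs with h
  · have : (0:ℝ) < 1 - x := by linarith
    constructor
    · positivity
    · rw [div_le_one this]; linarith
  · push_neg at h
    have : (0:ℝ) < x := by linarith
    constructor
    · have : (0:ℝ) ≤ 1 - x := by linarith
      positivity
    · rw [div_le_one this]; linarith

lemma farey_preimage (n : ℕ) (hn : 1 ≤ n) :
    farey ⁻¹' (sumLevel n) ∩ Set.Icc (0:ℝ) 1 = sumLevel (n + 1) := by
  ext x
  constructor
  · rintro ⟨⟨l, hl, hsum, t, ht, hx⟩, hx0, hx1⟩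
    obtain ⟨a, l', rfl⟩ : ∃ a l', l = a :: l' := by
      cases l with
      | nil => exact absurd rfl hl
      | cons a l' => exact ⟨a, l', rfl⟩
    have hz := cfAux_mem l' t ht
    obtain ⟨hz0, hz1⟩ := hz
    have ha : (1:ℝ) ≤ (a:ℝ) := by exact_mod_cast a.one_le
    set z := cfAux l' t with hzdef
    have hx' : farey x = 1 / ((a:ℝ) + z) := hx
    by_cases hle : x ≤ 1/2
    · have h1x : (0:ℝ) < 1 - x := by linarith
      have haz : (0:ℝ) < (a:ℝ) + z := by linarith
      have heq : x / (1 - x) = 1 / ((a:ℝ) + z) := by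
        rw [farey, if_pos hle] at hx'; exact hx'
      have hxeq : x * ((a:ℝ) + z) = 1 - x := by
        field_simp at heq; linarith
      have hxval : x = 1 / (((a:ℝ) + 1) + z) := by
        have h2 : x * (((a:ℝ) + 1) + z) = 1 := by ring_nf; ring_nf at hxeq; linarith
        have h3 : ((a:ℝ) + 1) + z ≠ 0 := by positivity
        field_simp
        linarith
      refine ⟨(a + 1) :: l', List.cons_ne_nil _ _, ?_, t, ht, ?_⟩
      · have hsum' : (a:ℕ) + (l'.map (fun a => (a : ℕ))).sum = n := hsum
        show (a:ℕ) + 1 + (l'.map (fun a => (a : ℕ))).sum = n + 1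
        omega
      · rw [cfAux, ← hzdef, hxval]
        push_cast
        ring_nf
    · push_neg at hle
      have hxpos : (0:ℝ) < x := by linarith
      have haz : (0:ℝ) < (a:ℝ) + z := by linarith
      have heq : (1 - x) / x = 1 / ((a:ℝ) + z) := by
        rw [farey, if_neg (not_le.mpr hle)] at hx'; exact hx'
      have hy : cfAux (a :: l') t = 1 / ((a:ℝ) + z) := by rw [cfAux]
      have hy01 : (0:ℝ) ≤ 1 / ((a:ℝ) + z) ∧ 1 / ((a:ℝ) + z) ≤ 1 := by
        constructor
        · positivity
        · rw [div_le_one haz]; linarith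
      have hxval : x = 1 / (1 + 1 / ((a:ℝ) + z)) := by
        have h2 : (1 - x) * ((a:ℝ) + z) = x := by
          field_simp at heq; linarith
        have h3 : x * (1 + 1 / ((a:ℝ) + z)) = 1 := by
          field_simp
          nlinarith
        have h4 : (0:ℝ) < 1 + 1 / ((a:ℝ) + z) := by
          have := hy01.1; linarith
        field_simp
        nlinarith
      refine ⟨1 :: a :: l', List.cons_ne_nil _ _, ?_, t, ht, ?_⟩
      · have hsum' : (a:ℕ) + (l'.map (fun a => (a : ℕ))).sum = n := hsum
        show 1 + ((a:ℕ) + (l'.map (fun a => (a : ℕ))).sum) = n + 1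
        omega
      · rw [cfAux, cfAux, ← hzdef, hxval]
        norm_num
  · rintro ⟨l, hl, hsum, t, ht, hx⟩
    obtain ⟨a, l', rfl⟩ : ∃ a l', l = a :: l' := by
      cases l with
      | nil => exact absurd rfl hl
      | cons a l' => exact ⟨a, l', rfl⟩
    have hz := cfAux_mem l' t ht
    obtain ⟨hz0, hz1⟩ := hz
    have ha : (1:ℝ) ≤ (a:ℝ) := by exact_mod_cast a.one_le
    set z := cfAux l' t with hzdef
    have hxval : x = 1 / ((a:ℝ) + z) := hx
    have hxmem : x ∈ Set.Icc (0:ℝ) 1 := hx ▸ cfAux_mem (a :: l') t ht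
    refine ⟨?_, hxmem⟩
    have hsum' : (a:ℕ) + (l'.map (fun a => (a : ℕ))).sum = n + 1 := hsum
    by_cases ha2 : (a:ℕ) = 1
    · -- a = 1, farey x = z = cfAux l' t
      have hl' : l' ≠ [] := by
        rintro rfl
        simp at hsum'
        omega
      have ha1 : (a:ℝ) = 1 := by exact_mod_cast ha2
      have : farey x = z := by
        rw [hxval, ha1]
        exact farey_one_add z ⟨hz0, hz1⟩
      have hls : (l'.map (fun a => (a : ℕ))).sum = n := by
        rw [ha2] at hsum'
        omega
      exact ⟨l', hl', hls, t, ht, (this.trans hzdef)⟩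
    · -- a ≥ 2
      have ha2' : 2 ≤ (a:ℕ) := by
        have := a.pos
        omega
      have haR : (2:ℝ) ≤ (a:ℝ) := by exact_mod_cast ha2'
      have hfx : farey x = 1 / (((a:ℝ) + z) - 1) := by
        rw [hxval]
        exact farey_small _ (by linarith)
      have ha1lt : (1:ℕ+) < a := by
        rw [← PNat.coe_lt_coe]
        exact ha2'
      have hcoe : ((a - 1 : ℕ+) : ℕ) = (a:ℕ) - 1 := by
        rw [PNat.sub_coe, if_pos ha1lt]
        simp
      refine ⟨(a - 1) :: l', List.cons_ne_nil _ _, ?_, t, ht, ?_⟩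
      · show ((a - 1 : ℕ+) : ℕ) + (l'.map (fun a => (a : ℕ))).sum = n
        rw [hcoe]
        omega
      · rw [cfAux, ← hzdef, hfx]
        have hcoeR : ((a - 1 : ℕ+) : ℝ) = (a:ℝ) - 1 := by
          have h1 : ((a - 1 : ℕ+) : ℝ) = (((a - 1 : ℕ+) : ℕ) : ℝ) := rfl
          rw [h1, hcoe, Nat.cast_sub (le_trans one_le_two ha2')]
          norm_num
        rw [hcoeR]
        ring_nf

lemma sumLevel_one : sumLevel 1 = Set.Icc (1/2 : ℝ) 1 := by
  ext x
  constructor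
  · rintro ⟨l, hl, hsum, t, ht, rfl⟩
    obtain ⟨a, l', rfl⟩ : ∃ a l', l = a :: l' := by
      cases l with
      | nil => exact absurd rfl hl
      | cons a l' => exact ⟨a, l', rfl⟩
    have hsum' : (a:ℕ) + (l'.map (fun a => (a : ℕ))).sum = 1 := hsum
    have ha : 0 < (a:ℕ) := a.pos
    have hl'0 : (l'.map (fun a => (a : ℕ))).sum = 0 := by omega
    have ha1 : (a:ℕ) = 1 := by omega
    clear hsum
    obtain rfl : l' = [] := by
      cases l' with
      | nil => rfl
      | cons b l'' =>
        have h2 : (b:ℕ) + (l''.map (fun a => (a : ℕ))).sum = 0 := hl'0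
        have hb : 0 < (b:ℕ) := b.pos
        omega
    obtain ⟨ht0, ht1⟩ := ht
    have haR : (a:ℝ) = 1 := by exact_mod_cast ha1
    rw [cfAux, cfAux, haR]
    constructor
    · rw [div_le_div_iff₀ two_pos (by linarith)]; linarith
    · rw [div_le_one (by linarith)]; linarith
  · rintro ⟨h1, h2⟩
    have hx0 : (0:ℝ) < x := by linarith
    refine ⟨[1], by simp, by simp, 1/x - 1, ⟨?_, ?_⟩, ?_⟩
    · have : 1/x ≥ 1 := by
        rw [ge_iff_le, le_div_iff₀ hx0]; linarith
      linarith
    · have : 1/x ≤ 2 := by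
        rw [div_le_iff₀ hx0]; linarith
      linarith
    · rw [cfAux, cfAux]
      push_cast
      field_simp
      ring

theorem sumLevel_preimage (n : ℕ) (hn : 1 ≤ n) :
    farey ⁻¹' (sumLevel n) ∩ Set.Icc (0:ℝ) 1 = sumLevel (n + 1) ∧
    sumLevel n = farey^[n - 1] ⁻¹' (Set.Icc (1/2 : ℝ) 1) ∩ Set.Icc (0:ℝ) 1 := by
  refine ⟨farey_preimage n hn, ?_⟩
  induction n, hn using Nat.le_induction with
  | base =>
    simp only [Nat.sub_self, Function.iterate_zero, Set.preimage_id, sumLevel_one]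
    exact (Set.inter_eq_left.mpr (Set.Icc_subset_Icc (by norm_num) le_rfl)).symm
  | succ n hn ih =>
    have step : sumLevel (n + 1) = farey ⁻¹' (sumLevel n) ∩ Set.Icc (0:ℝ) 1 :=
      (farey_preimage n hn).symm
    rw [step, ih, Set.preimage_inter]
    have hsub : Set.Icc (0:ℝ) 1 ⊆ farey ⁻¹' Set.Icc (0:ℝ) 1 := fun x hx => farey_maps x hx
    have h01 : farey ⁻¹' (Set.Icc (0:ℝ) 1) ∩ Set.Icc (0:ℝ) 1 = Set.Icc (0:ℝ) 1 :=
      Set.inter_eq_right.mpr hsub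
    obtain ⟨m, rfl⟩ : ∃ m, n = m + 1 := ⟨n - 1, by omega⟩
    have hiter : farey ⁻¹' (farey^[m + 1 - 1] ⁻¹' Set.Icc (1/2 : ℝ) 1) =
        farey^[m + 1 + 1 - 1] ⁻¹' Set.Icc (1/2 : ℝ) 1 := by
      simp only [Nat.add_sub_cancel]
      rw [← Set.preimage_comp, ← Function.iterate_succ]
    rw [Set.inter_assoc, h01, hiter]
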